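/- Rapid decay of the non-resonant half-wave contribution (the paper's claim that replacing e^{−itP} by e^{itP} produces an O(λ^{−N}) kernel). Let n ≥ 1, let Ψ : ℝ → ℂ be Schwartz, and let β ∈ C_c^∞(ℝ) be supported in {t : 1/2 < |t| < 2}. For λ, μ, T > 0 and w ∈ ℝⁿ define J_{λ,μ,T}(w) = (2π)^{−n} T^{−1} ∫_{ℝⁿ} ( ∫_ℝ e^{it(λ + |ξ|)} β(t/μ) 𝓕Ψ(t/T) dt ) e^{i⟨w,ξ⟩} dξ (an iterated integral; the inner integral defines an absolutely integrable function of ξ). For every N ∈ ℕ there exists C_N, depending only on n, β, Ψ, N, such that for all λ ≥ 2, all μ, T with 1 ≤ μ ≤ T ≤ λ, and all w ∈ ℝⁿ, |J_{λ,μ,T}(w)| ≤ C_N λ^{−N}. -/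

import Mathlib

open MeasureTheory Complex Finset
open scoped FourierTransform Real

private lemma integrable_iteratedDeriv_aux
    {f : ℝ → ℂ} (hf : ContDiff ℝ (⊤ : ℕ∞) f) (hc : HasCompactSupport f) (m : ℕ) :
    MeasureTheory.Integrable (iteratedDeriv m f) := by
  have hcs : HasCompactSupport (iteratedDeriv m f) := by
    rw [iteratedDeriv_eq_equiv_comp]
    exact (hc.iteratedFDeriv m).comp_left (map_zero _)
  exact (hf.continuous_iteratedDeriv m (by exact_mod_cast le_top)).integrable_of_hasCompactSupport hcs

private lemma osc_bound {f : ℝ → ℂ} (k : ℕ) (hf : ContDiff ℝ (⊤ : ℕ∞) f)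
    (hc : HasCompactSupport f) {r : ℝ} (hr : 0 < r) :
    ‖∫ t : ℝ, Complex.exp (Complex.I * (↑t * ↑r)) * f t‖
      ≤ (r ^ k)⁻¹ * ∫ t : ℝ, ‖iteratedDeriv k f t‖ := by
  have hint : ∀ m : ℕ, (m : ℕ∞) ≤ (⊤ : ℕ∞) → Integrable (iteratedDeriv m f) :=
    fun m _ => integrable_iteratedDeriv_aux hf hc m
  have hπ : (0:ℝ) < 2 * π := by positivity
  set w0 : ℝ := -(r / (2 * π)) with hw0
  have hstep1 : ∫ t : ℝ, Complex.exp (Complex.I * (↑t * ↑r)) * f t = 𝓕 f w0 := by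
    rw [Real.fourier_eq']
    congr 1
    funext t
    rw [show (inner ℝ t w0 : ℝ) = t * w0 by rw [RCLike.inner_apply, conj_trivial, mul_comm]]
    have harg : -2 * π * (t * w0) = t * r := by
      rw [hw0]; field_simp
    rw [harg, smul_eq_mul]
    push_cast
    try ring_nf
  have hstep2 := Real.fourier_iteratedDeriv (N := (⊤:ℕ∞)) (n := k) hf hint le_top
  have hcoef : (2 * ↑π * I * (w0:ℂ)) = ((-r : ℝ) : ℂ) * I := by
    have hπc : (π:ℂ) ≠ 0 := by exact_mod_cast Real.pi_ne_zero
    rw [hw0]; push_cast; field_simp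
  have hnorm : ‖𝓕 (iteratedDeriv k f) w0‖ = r ^ k * ‖𝓕 f w0‖ := by
    rw [congrFun hstep2 w0, norm_smul, norm_pow, hcoef]
    rw [norm_mul, Complex.norm_real, Complex.norm_I, mul_one, Real.norm_eq_abs,
      abs_neg, abs_of_pos hr]
  have hle : ‖𝓕 (iteratedDeriv k f) w0‖ ≤ ∫ t : ℝ, ‖iteratedDeriv k f t‖ :=
    VectorFourier.norm_fourierIntegral_le_integral_norm _ _ _ _ _
  rw [hstep1]
  have hrk : (0:ℝ) < r ^ k := pow_pos hr k
  calc ‖𝓕 f w0‖ = (r^k)⁻¹ * (r^k * ‖𝓕 f w0‖) := by field_simp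
    _ = (r^k)⁻¹ * ‖𝓕 (iteratedDeriv k f) w0‖ := by rw [hnorm]
    _ ≤ _ := by gcongr

/-- The kernel `J_{λ,μ,T}(w)` of the non-resonant half-wave branch on `ℝⁿ`:
`J(w) = (2π)^{-n} T⁻¹ ∫_ξ (∫_t e^{it(λ+|ξ|)} β(t/μ) 𝓕Ψ(t/T) dt) e^{i⟨w,ξ⟩} dξ`. -/
noncomputable def nonResonantWaveKernel (n : ℕ) (Ψ : ℝ → ℂ) (β : ℝ → ℝ)
    (lam μ T : ℝ) (w : EuclideanSpace ℝ (Fin n)) : ℂ :=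
  ((((2 * Real.pi) ^ n)⁻¹ : ℝ) : ℂ) * ((T⁻¹ : ℝ) : ℂ) *
    ∫ ξ : EuclideanSpace ℝ (Fin n),
      (∫ t : ℝ,
          Complex.exp (Complex.I * (t * (lam + ‖ξ‖))) *
            ((β (t / μ) : ℝ) : ℂ) * FourierTransform.fourier Ψ (t / T)) *
        Complex.exp (Complex.I * ((inner ℝ w ξ : ℝ) : ℂ))

set_option maxHeartbeats 2000000 in
/-- **Rapid decay of the non-resonant half-wave contribution** (the paper's
claim that replacing `e^{-itP}` by `e^{itP}` produces an `O(λ^{-N})` kernel):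
for Schwartz `Ψ`, `β ∈ C_c^∞` supported in `{1/2 < |t| < 2}` and every `N`
there is `C_N` such that for all `λ ≥ 2`, `1 ≤ μ ≤ T ≤ λ` and all `w ∈ ℝⁿ`,
`|J_{λ,μ,T}(w)| ≤ C_N λ^{-N}`. -/
theorem nonResonantWaveKernel_rapid_decay
    (n : ℕ) (hn : 1 ≤ n) (Ψ : SchwartzMap ℝ ℂ) (β : ℝ → ℝ)
    (hβsm : ContDiff ℝ (⊤ : ℕ∞) β) (hβc : HasCompactSupport β)
    (hβsupp : Function.support β ⊆ {t : ℝ | 1 / 2 < |t| ∧ |t| < 2})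
    (N : ℕ) :
    ∃ C : ℝ, 0 < C ∧
      ∀ lam μ T : ℝ, 2 ≤ lam → 1 ≤ μ → μ ≤ T → T ≤ lam →
        ∀ w : EuclideanSpace ℝ (Fin n),
          ‖nonResonantWaveKernel n (fun s => Ψ s) β lam μ T w‖ ≤ C * lam ^ (-(N : ℝ)) := by
  classical
  set Φ : SchwartzMap ℝ ℂ := SchwartzMap.fourierTransformCLM ℝ Ψ with hΦdef
  have hΦeq : ∀ x : ℝ, FourierTransform.fourier (fun s => Ψ s) x = Φ x := by
    intro x
    rw [hΦdef, SchwartzMap.fourierTransformCLM_apply, SchwartzMap.fourier_coe]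
  set k : ℕ := N + n + 2 with hk
  have hβb : ∀ i : ℕ, ∃ C : ℝ, 0 ≤ C ∧ ∀ x : ℝ, ‖iteratedDeriv i β x‖ ≤ C := by
    intro i
    have hcont : Continuous (iteratedDeriv i β) :=
      hβsm.continuous_iteratedDeriv i (by exact_mod_cast le_top)
    have hcs : HasCompactSupport (iteratedDeriv i β) := by
      rw [iteratedDeriv_eq_equiv_comp]
      exact (hβc.iteratedFDeriv i).comp_left (map_zero _)
    obtain ⟨C, hC⟩ := hcont.bounded_above_of_compact_support hcs
    exact ⟨max C 0, le_max_right _ _, fun x => (hC x).trans (le_max_left _ _)⟩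
  choose Cβ hCβ0 hCβ using hβb
  have hΦb : ∀ j : ℕ, ∃ C : ℝ, 0 ≤ C ∧ ∀ x : ℝ, ‖iteratedDeriv j (fun s : ℝ => Φ s) x‖ ≤ C := by
    intro j
    obtain ⟨C, hC0, hC⟩ := Φ.decay 0 j
    refine ⟨max C 0, le_max_right _ _, fun x => ?_⟩
    rw [← norm_iteratedFDeriv_eq_norm_iteratedDeriv]
    have h := hC x
    simp only [pow_zero, one_mul] at h
    exact le_trans h (le_max_left _ _)
  choose CΦ hCΦ0 hCΦ using hΦb
  set B : ℝ := ∑ i ∈ Finset.range (k+1), (k.choose i : ℝ) * Cβ i * CΦ (k - i) with hB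
  have hB0 : 0 ≤ B := Finset.sum_nonneg fun i _ => by
    have h1 := hCβ0 i; have h2 := hCΦ0 (k - i); positivity
  have hCnint : Integrable (fun ξ : EuclideanSpace ℝ (Fin n) => ((1 + ‖ξ‖) ^ (n+1))⁻¹) := by
    have h1 : ((Module.finrank ℝ (EuclideanSpace ℝ (Fin n)) : ℝ)) < ((n:ℝ) + 1) := by
      rw [finrank_euclideanSpace_fin]; linarith
    have h2 := integrable_one_add_norm (E := EuclideanSpace ℝ (Fin n)) (μ := volume) h1
    refine h2.congr (Filter.Eventually.of_forall fun x => ?_)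
    show (1 + ‖x‖) ^ (-((n:ℝ) + 1)) = ((1 + ‖x‖) ^ (n+1))⁻¹
    rw [← Real.rpow_natCast (1 + ‖x‖) (n+1), ← Real.rpow_neg (by positivity)]
    norm_num
  set Cn : ℝ := ∫ ξ : EuclideanSpace ℝ (Fin n), ((1 + ‖ξ‖) ^ (n+1))⁻¹ with hCn
  have hCn0 : 0 ≤ Cn := integral_nonneg fun ξ => by positivity
  refine ⟨4 * B * Cn + 1, by positivity, ?_⟩
  intro lam μ T hlam hμ hμT hT w
  have hμ0 : (0:ℝ) < μ := by linarith
  have hT0 : (0:ℝ) < T := by linarith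
  have hlam0 : (0:ℝ) < lam := by linarith
  set f : ℝ → ℂ := fun t => ((β (μ⁻¹ * t) : ℝ) : ℂ) * Φ (T⁻¹ * t) with hf
  have hg1 : ContDiff ℝ (⊤:ℕ∞) (fun t : ℝ => ((β (μ⁻¹ * t) : ℝ) : ℂ)) :=
    Complex.ofRealCLM.contDiff.comp (hβsm.comp (contDiff_const.mul contDiff_id))
  have hg2 : ContDiff ℝ (⊤:ℕ∞) (fun t : ℝ => Φ (T⁻¹ * t)) :=
    (Φ.smooth ⊤).comp (contDiff_const.mul contDiff_id)
  have hfsm : ContDiff ℝ (⊤:ℕ∞) f := by rw [hf]; exact hg1.mul hg2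
  have hsuppf : tsupport f ⊆ Set.Icc (-(2*μ)) (2*μ) := by
    apply closure_minimal _ isClosed_Icc
    intro t ht
    have hβne : β (μ⁻¹ * t) ≠ 0 := by
      intro h0
      apply ht
      simp [hf, h0]
    have hmem := hβsupp (Function.mem_support.mpr hβne)
    have h2 : |μ⁻¹ * t| < 2 := hmem.2
    rw [abs_mul, abs_inv, abs_of_pos hμ0] at h2
    have h3 := (mul_lt_mul_iff_right₀ hμ0).2 h2
    rw [← mul_assoc, mul_inv_cancel₀ (ne_of_gt hμ0), one_mul] at h3
    rcases abs_lt.mp h3 with ⟨ha, hb⟩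
    constructor <;> [linarith; linarith]
  have hcsupp : HasCompactSupport f :=
    isCompact_Icc.of_isClosed_subset (isClosed_tsupport f) hsuppf
  have hμinv : μ⁻¹ ≤ 1 := by
    rw [inv_le_one_iff₀]; right; exact hμ
  have hTinv : T⁻¹ ≤ 1 := by
    rw [inv_le_one_iff₀]; right; linarith
  have hfacβ : ∀ i, i ≤ k → ∀ x : ℝ,
      ‖iteratedFDeriv ℝ i (fun t : ℝ => ((β (μ⁻¹*t) :ℝ):ℂ)) x‖ ≤ Cβ i := by
    intro i _ x
    rw [norm_iteratedFDeriv_eq_norm_iteratedDeriv]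
    have hβc' : ContDiff ℝ i (fun s : ℝ => ((β s : ℝ) : ℂ)) :=
      (Complex.ofRealCLM.contDiff.comp hβsm).of_le (by exact_mod_cast le_top)
    rw [iteratedDeriv_comp_const_smul hβc' μ⁻¹]
    rw [norm_smul]
    have h1 : ‖(μ⁻¹:ℝ)^i‖ ≤ 1 := by
      rw [norm_pow, Real.norm_eq_abs, abs_inv, abs_of_pos hμ0]
      exact pow_le_one₀ (by positivity) hμinv
    have h2 : ‖iteratedDeriv i (fun s : ℝ => ((β s:ℝ):ℂ)) (μ⁻¹ * x)‖
        = ‖iteratedDeriv i β (μ⁻¹*x)‖ := by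
      rw [← norm_iteratedFDeriv_eq_norm_iteratedDeriv, ← norm_iteratedFDeriv_eq_norm_iteratedDeriv]
      exact Complex.ofRealLI.norm_iteratedFDeriv_comp_left hβsm.contDiffAt (by exact_mod_cast le_top)
    calc ‖(μ⁻¹:ℝ)^i‖ * ‖iteratedDeriv i (fun s : ℝ => ((β s:ℝ):ℂ)) (μ⁻¹ * x)‖
        ≤ 1 * Cβ i := mul_le_mul h1 (h2 ▸ hCβ i (μ⁻¹*x)) (norm_nonneg _) zero_le_one
      _ = Cβ i := one_mul _
  have hfacΦ : ∀ j, j ≤ k → ∀ x : ℝ,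
      ‖iteratedFDeriv ℝ j (fun t : ℝ => Φ (T⁻¹*t)) x‖ ≤ CΦ j := by
    intro j _ x
    rw [norm_iteratedFDeriv_eq_norm_iteratedDeriv]
    have hΦc' : ContDiff ℝ j (fun s : ℝ => Φ s) :=
      (Φ.smooth ⊤).of_le (by exact_mod_cast le_top)
    rw [iteratedDeriv_comp_const_smul hΦc' T⁻¹]
    rw [norm_smul]
    have h1 : ‖(T⁻¹:ℝ)^j‖ ≤ 1 := by
      rw [norm_pow, Real.norm_eq_abs, abs_inv, abs_of_pos hT0]
      exact pow_le_one₀ (by positivity) hTinv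
    calc ‖(T⁻¹:ℝ)^j‖ * ‖iteratedDeriv j (fun s : ℝ => Φ s) (T⁻¹ * x)‖
        ≤ 1 * CΦ j := mul_le_mul h1 (hCΦ j (T⁻¹*x)) (norm_nonneg _) zero_le_one
      _ = CΦ j := one_mul _
  have hderiv_bound : ∀ t : ℝ, ‖iteratedDeriv k f t‖ ≤ B := by
    intro t
    rw [← norm_iteratedFDeriv_eq_norm_iteratedDeriv, hf]
    refine (norm_iteratedFDeriv_mul_le hg1 hg2 t (by exact_mod_cast le_top)).trans ?_
    rw [hB]
    refine Finset.sum_le_sum fun i hi => ?_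
    have hik : i ≤ k := Nat.lt_succ_iff.mp (Finset.mem_range.mp hi)
    have h1 := hfacβ i hik t
    have h2 := hfacΦ (k - i) (Nat.sub_le _ _) t
    have c0 : (0:ℝ) ≤ (k.choose i : ℝ) := Nat.cast_nonneg _
    exact mul_le_mul (mul_le_mul le_rfl h1 (norm_nonneg _) c0) h2 (norm_nonneg _)
      (mul_nonneg c0 (hCβ0 i))
  have hvanish : ∀ t : ℝ, t ∉ Set.Icc (-(2*μ)) (2*μ) → ‖iteratedDeriv k f t‖ = 0 := by
    intro t ht
    have ht' : t ∉ tsupport f := fun hmem => ht (hsuppf hmem)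
    have h0 : iteratedFDeriv ℝ k f t = 0 := by
      by_contra h
      exact ht' (tsupport_iteratedFDeriv_subset k (subset_closure (Function.mem_support.mpr h)))
    rw [iteratedDeriv_eq_iteratedFDeriv, h0]
    simp
  have hL1 : ∫ t : ℝ, ‖iteratedDeriv k f t‖ ≤ B * (4 * μ) := by
    have hind : Integrable ((Set.Icc (-(2*μ)) (2*μ)).indicator (fun _ : ℝ => B)) := by
      rw [integrable_indicator_iff measurableSet_Icc]
      exact integrableOn_const measure_Icc_lt_top.ne
    have hmono : ∀ t : ℝ, ‖iteratedDeriv k f t‖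
        ≤ (Set.Icc (-(2*μ)) (2*μ)).indicator (fun _ => B) t := by
      intro t
      by_cases ht : t ∈ Set.Icc (-(2*μ)) (2*μ)
      · rw [Set.indicator_of_mem ht]; exact hderiv_bound t
      · rw [Set.indicator_of_notMem ht, ← hvanish t ht]
    calc ∫ t : ℝ, ‖iteratedDeriv k f t‖
        ≤ ∫ t : ℝ, (Set.Icc (-(2*μ)) (2*μ)).indicator (fun _ => B) t :=
          integral_mono_of_nonneg (Filter.Eventually.of_forall fun t => norm_nonneg _) hind
            (Filter.Eventually.of_forall hmono)
      _ = (volume (Set.Icc (-(2*μ)) (2*μ))).toReal • B :=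
          integral_indicator_const B measurableSet_Icc
      _ = B * (4 * μ) := by
          rw [smul_eq_mul, Real.volume_Icc, ENNReal.toReal_ofReal (by linarith)]
          ring
  have hIpos : (0:ℝ) ≤ ∫ t : ℝ, ‖iteratedDeriv k f t‖ := integral_nonneg fun t => norm_nonneg _
  have hpoint : ∀ ξ : EuclideanSpace ℝ (Fin n),
      ‖(∫ t : ℝ,
          Complex.exp (Complex.I * (t * (lam + ‖ξ‖))) *
            ((β (t / μ) : ℝ) : ℂ) * FourierTransform.fourier (fun s => Ψ s) (t / T)) *
        Complex.exp (Complex.I * ((inner ℝ w ξ : ℝ) : ℂ))‖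
      ≤ (4 * B * (lam ^ N)⁻¹) * ((1 + ‖ξ‖) ^ (n+1))⁻¹ := by
    intro ξ
    have hr : (0:ℝ) < lam + ‖ξ‖ := by have := norm_nonneg ξ; linarith
    rw [norm_mul]
    have hexp1 : ‖Complex.exp (Complex.I * ((inner ℝ w ξ : ℝ) : ℂ))‖ = 1 := by
      rw [mul_comm, Complex.norm_exp_ofReal_mul_I]
    rw [hexp1, mul_one]
    have heq : (fun t : ℝ =>
          Complex.exp (Complex.I * (t * (lam + ‖ξ‖))) *
            ((β (t / μ) : ℝ) : ℂ) * FourierTransform.fourier (fun s => Ψ s) (t / T))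
        = fun t : ℝ => Complex.exp (Complex.I * ((t:ℂ) * ((lam + ‖ξ‖ : ℝ):ℂ))) * f t := by
      funext t
      rw [hf, hΦeq (t / T), div_eq_inv_mul, div_eq_inv_mul]
      push_cast
      ring
    rw [heq]
    refine (osc_bound k hfsm hcsupp hr).trans ?_
    have hXpos : (0:ℝ) < (1 + ‖ξ‖)^(n+1) := by positivity
    have hbig : lam^(N+1) * (1+‖ξ‖)^(n+1) ≤ (lam+‖ξ‖)^k := by
      have e : (lam+‖ξ‖)^k = (lam+‖ξ‖)^(N+1) * (lam+‖ξ‖)^(n+1) := by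
        rw [← pow_add]; congr 1; omega
      rw [e]
      have hA : lam^(N+1) ≤ (lam+‖ξ‖)^(N+1) :=
        pow_le_pow_left₀ (by linarith) (by linarith [norm_nonneg ξ]) _
      have hB' : (1+‖ξ‖)^(n+1) ≤ (lam+‖ξ‖)^(n+1) :=
        pow_le_pow_left₀ (by positivity) (by linarith) _
      exact mul_le_mul hA hB' (by positivity) (by positivity)
    calc ((lam+‖ξ‖)^k)⁻¹ * ∫ t : ℝ, ‖iteratedDeriv k f t‖
        ≤ (lam^(N+1) * (1+‖ξ‖)^(n+1))⁻¹ * (B * (4*μ)) := by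
          apply mul_le_mul _ hL1 hIpos (by positivity)
          apply inv_anti₀ (by positivity) hbig
      _ ≤ (lam^(N+1) * (1+‖ξ‖)^(n+1))⁻¹ * (B * (4*lam)) := by
          apply mul_le_mul_of_nonneg_left _ (by positivity)
          have hμlam : μ ≤ lam := le_trans hμT hT
          nlinarith
      _ = (4 * B * (lam^N)⁻¹) * ((1 + ‖ξ‖)^(n+1))⁻¹ := by
          rw [pow_succ]
          field_simp
  have houter : ‖nonResonantWaveKernel n (fun s => Ψ s) β lam μ T w‖
      ≤ (4*B*(lam^N)⁻¹) * Cn := by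
    rw [nonResonantWaveKernel, norm_mul, norm_mul]
    have hc1 : ‖(((((2 * Real.pi) ^ n)⁻¹ : ℝ)) : ℂ)‖ ≤ 1 := by
      rw [Complex.norm_real, Real.norm_eq_abs,
        abs_of_nonneg (a := ((((2 * Real.pi) ^ n)⁻¹ : ℝ))) (by positivity)]
      rw [inv_le_one_iff₀]; right
      exact one_le_pow₀ (by nlinarith [Real.pi_gt_three])
    have hc2 : ‖((T⁻¹ : ℝ) : ℂ)‖ ≤ 1 := by
      rw [Complex.norm_real, Real.norm_eq_abs, abs_inv, abs_of_pos hT0]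
      exact hTinv
    have hintle : ‖∫ ξ : EuclideanSpace ℝ (Fin n),
        (∫ t : ℝ,
            Complex.exp (Complex.I * (t * (lam + ‖ξ‖))) *
              ((β (t / μ) : ℝ) : ℂ) * FourierTransform.fourier (fun s => Ψ s) (t / T)) *
          Complex.exp (Complex.I * ((inner ℝ w ξ : ℝ) : ℂ))‖
        ≤ (4*B*(lam^N)⁻¹) * Cn := by
      refine (norm_integral_le_integral_norm _).trans ?_
      have hm := integral_mono_of_nonneg (Filter.Eventually.of_forall fun ξ => norm_nonneg _)
        (hCnint.const_mul (4*B*(lam^N)⁻¹)) (Filter.Eventually.of_forall hpoint)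
      refine hm.trans ?_
      rw [integral_const_mul]
    calc ‖(((((2 * Real.pi) ^ n)⁻¹ : ℝ)) : ℂ)‖ * ‖((T⁻¹ : ℝ) : ℂ)‖ * ‖_‖
        ≤ 1 * 1 * ((4*B*(lam^N)⁻¹) * Cn) :=
          mul_le_mul (mul_le_mul hc1 hc2 (norm_nonneg _) zero_le_one) hintle (norm_nonneg _)
            (by norm_num)
      _ = (4*B*(lam^N)⁻¹) * Cn := by ring
  have hrw : lam ^ (-(N:ℝ)) = (lam ^ N)⁻¹ := by
    rw [Real.rpow_neg hlam0.le, Real.rpow_natCast]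
  rw [hrw]
  refine houter.trans ?_
  have he : (4*B*(lam^N)⁻¹) * Cn = (4*B*Cn) * (lam^N)⁻¹ := by ring
  rw [he]
  apply mul_le_mul_of_nonneg_right _ (by positivity)
  linarith
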